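/- Consequence of the Bessel ratio bounds: for all κ₁, κ₂ in an interval (0, ∞) and ν = n/2 − 1 > 0, |log( κ₁^{n/2−1} I_{n/2−1}(κ₂) / (κ₂^{n/2−1} I_{n/2−1}(κ₁)) )| ≤ |κ₁ − κ₂|. -/

import Mathlib

/-- The modified Bessel function of the first kind. -/
noncomputable def besselI (ν x : ℝ) : ℝ :=
  ∑' m : ℕ, (x / 2) ^ ((2 * m : ℝ) + ν) / (Nat.factorial m * Real.Gamma (m + ν + 1))

namespace BesselAux

noncomputable def c (ν : ℝ) (m : ℕ) : ℝ :=
  1 / (4 ^ m * m.factorial * Real.Gamma (m + ν + 1))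

noncomputable def g (ν x : ℝ) : ℝ := ∑' m : ℕ, c ν m * x ^ (2 * m)

lemma c_pos {ν : ℝ} (hν : 0 < ν) (m : ℕ) : 0 < c ν m := by
  have h : 0 < Real.Gamma ((m : ℝ) + ν + 1) := Real.Gamma_pos_of_pos (by positivity)
  unfold c
  positivity

lemma c_succ {ν : ℝ} (hν : 0 < ν) (m : ℕ) :
    c ν (m + 1) = c ν m / (4 * ((m : ℝ) + 1) * ((m : ℝ) + ν + 1)) := by
  have h0 : (0:ℝ) < (m : ℝ) + ν + 1 := by positivity
  have h2 : Real.Gamma (((m + 1 : ℕ) : ℝ) + ν + 1)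
      = ((m : ℝ) + ν + 1) * Real.Gamma ((m : ℝ) + ν + 1) := by
    have h1 : ((m + 1 : ℕ) : ℝ) + ν + 1 = ((m : ℝ) + ν + 1) + 1 := by push_cast; ring
    rw [h1, Real.Gamma_add_one h0.ne']
  have hΓ : Real.Gamma ((m : ℝ) + ν + 1) ≠ 0 :=
    (Real.Gamma_pos_of_pos (by positivity)).ne'
  unfold c
  rw [h2, pow_succ, Nat.factorial_succ]
  push_cast
  field_simp

lemma summable_S {ν : ℝ} (hν : 0 < ν) {R : ℝ} (hR : 0 < R) :
    Summable (fun m : ℕ => ((m : ℝ) + 1) * c ν m * R ^ (2 * m)) := by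
  apply summable_of_ratio_norm_eventually_le (r := 1/2) (by norm_num)
  filter_upwards [Filter.eventually_ge_atTop (Nat.ceil (R ^ 2))] with m hm
  have hm' : R ^ 2 ≤ (m : ℝ) := by exact_mod_cast Nat.ceil_le.mp hm
  have hc := c_pos hν m
  have hRp : (0:ℝ) < R ^ (2 * m) := by positivity
  have hD : (0:ℝ) < 4 * ((m : ℝ) + 1) * ((m : ℝ) + ν + 1) := by positivity
  have hnn : ∀ k : ℕ, 0 ≤ ((k : ℝ) + 1) * c ν k * R ^ (2 * k) := fun k =>
    mul_nonneg (mul_nonneg (by positivity) (c_pos hν k).le) (by positivity)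
  rw [Real.norm_of_nonneg (hnn (m+1)), Real.norm_of_nonneg (hnn m)]
  have e1 : R ^ (2 * (m + 1)) = R ^ (2 * m) * R ^ 2 := by
    rw [← pow_add]; ring_nf
  rw [c_succ hν m, e1]
  push_cast
  calc ((m : ℝ) + 1 + 1) * (c ν m / (4 * ((m : ℝ) + 1) * ((m : ℝ) + ν + 1))) *
        (R ^ (2 * m) * R ^ 2)
      = (c ν m * R ^ (2 * m)) *
        ((((m : ℝ) + 2) * R ^ 2) / (4 * ((m : ℝ) + 1) * ((m : ℝ) + ν + 1))) := by
        ring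
    _ ≤ (c ν m * R ^ (2 * m)) * (((m : ℝ) + 1) / 2) := by
        apply mul_le_mul_of_nonneg_left _ (by positivity)
        rw [div_le_div_iff₀ hD (by norm_num)]
        nlinarith [hm', hν, sq_nonneg ((m : ℝ) - 1)]
    _ = 1 / 2 * (((m : ℝ) + 1) * c ν m * R ^ (2 * m)) := by ring

lemma summable_g {ν : ℝ} (hν : 0 < ν) (x : ℝ) :
    Summable (fun m : ℕ => c ν m * x ^ (2 * m)) := by
  apply Summable.of_norm_bounded (summable_S hν (R := |x| + 1) (by positivity))
  intro m
  have hc := c_pos hν m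
  rw [norm_mul, norm_pow, Real.norm_of_nonneg hc.le, Real.norm_eq_abs]
  have hP : (0:ℝ) ≤ (|x| + 1) ^ (2 * m) := by positivity
  calc c ν m * |x| ^ (2 * m) ≤ c ν m * (|x| + 1) ^ (2 * m) :=
        mul_le_mul_of_nonneg_left
          (pow_le_pow_left₀ (abs_nonneg x) (by linarith [abs_nonneg x]) _) hc.le
    _ ≤ ((m : ℝ) + 1) * c ν m * (|x| + 1) ^ (2 * m) := by
        have h := mul_nonneg (mul_nonneg (Nat.cast_nonneg m : (0:ℝ) ≤ (m:ℝ)) hc.le) hP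
        nlinarith

lemma summable_d {ν : ℝ} (hν : 0 < ν) (x : ℝ) :
    Summable (fun m : ℕ => c ν m * (((2 * m : ℕ) : ℝ) * x ^ (2 * m - 1))) := by
  apply Summable.of_norm_bounded ((summable_S hν (R := |x| + 1) (by positivity)).mul_left 2)
  intro m
  have hc := c_pos hν m
  have h1 : (1:ℝ) ≤ |x| + 1 := by linarith [abs_nonneg x]
  rw [norm_mul, norm_mul, norm_pow, Real.norm_of_nonneg hc.le,
    Real.norm_of_nonneg (by positivity : (0:ℝ) ≤ ((2 * m : ℕ) : ℝ)), Real.norm_eq_abs]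
  have h2 : |x| ^ (2 * m - 1) ≤ (|x| + 1) ^ (2 * m) := by
    calc |x| ^ (2 * m - 1) ≤ (|x| + 1) ^ (2 * m - 1) :=
          pow_le_pow_left₀ (abs_nonneg x) (by linarith [abs_nonneg x]) _
      _ ≤ (|x| + 1) ^ (2 * m) := pow_le_pow_right₀ h1 (Nat.sub_le _ _)
  calc c ν m * (((2 * m : ℕ) : ℝ) * |x| ^ (2 * m - 1))
      ≤ c ν m * ((2 * ((m : ℝ) + 1)) * (|x| + 1) ^ (2 * m)) :=
        mul_le_mul_of_nonneg_left
          (mul_le_mul (by push_cast; linarith) h2 (by positivity) (by positivity)) hc.le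
    _ = 2 * (((m : ℝ) + 1) * c ν m * (|x| + 1) ^ (2 * m)) := by ring



lemma g_pos {ν : ℝ} (hν : 0 < ν) (x : ℝ) : 0 < g ν x := by
  have h0 : 0 < c ν 0 * x ^ (2 * 0) := by
    simpa using c_pos hν 0
  have hle : c ν 0 * x ^ (2 * 0) ≤ g ν x := by
    apply Summable.le_tsum (summable_g hν x) 0
    intro i _
    have := c_pos hν i
    have : (0:ℝ) ≤ x ^ (2 * i) := by rw [pow_mul]; positivity
    exact mul_nonneg (c_pos hν i).le this
  linarith

lemma g_mono {ν : ℝ} (hν : 0 < ν) {x y : ℝ} (hx : 0 ≤ x) (hxy : x ≤ y) :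
    g ν x ≤ g ν y := by
  apply Summable.tsum_le_tsum _ (summable_g hν x) (summable_g hν y)
  intro m
  exact mul_le_mul_of_nonneg_left (pow_le_pow_left₀ hx hxy _) (c_pos hν m).le

lemma gderiv_le {ν : ℝ} (hν : 0 < ν) {x : ℝ} (hx : 0 ≤ x) :
    ∑' m : ℕ, c ν m * (((2 * m : ℕ) : ℝ) * x ^ (2 * m - 1)) ≤ g ν x := by
  set a : ℕ → ℝ := fun m => c ν m * x ^ (2 * m) with ha
  set b : ℕ → ℝ := fun m => c ν m * (((2 * m : ℕ) : ℝ) * x ^ (2 * m - 1)) with hb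
  have Sa : Summable a := summable_g hν x
  have Sb : Summable b := summable_d hν x
  have Sa' : Summable fun k => a (k + 1) := (summable_nat_add_iff 1).2 Sa
  have Sb' : Summable fun k => b (k + 1) := (summable_nat_add_iff 1).2 Sb
  have key : ∀ k : ℕ, b (k + 1) ≤ (a k + a (k + 1)) / 2 := by
    intro k
    have hD : (0:ℝ) < 4 * ((k : ℝ) + 1) * ((k : ℝ) + ν + 1) := by positivity
    have hc := c_pos hν k
    have ht : (0:ℝ) ≤ x ^ (2 * k) := pow_nonneg hx _
    have e1 : 2 * (k + 1) - 1 = 2 * k + 1 := by omega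
    have e2 : x ^ (2 * (k + 1)) = x ^ (2 * k) * x ^ 2 := by rw [← pow_add]; ring_nf
    have e3 : x ^ (2 * k + 1) = x ^ (2 * k) * x := pow_succ x (2 * k)
    have e4 : ((2 * (k + 1) : ℕ) : ℝ) = 2 * ((k : ℝ) + 1) := by push_cast; ring
    simp only [hb, ha, c_succ hν k, e1, e2, e3, e4]
    have heq : (c ν k * x ^ (2 * k) +
          c ν k / (4 * ((k : ℝ) + 1) * ((k : ℝ) + ν + 1)) * (x ^ (2 * k) * x ^ 2)) / 2
        - c ν k / (4 * ((k : ℝ) + 1) * ((k : ℝ) + ν + 1)) *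
          (2 * ((k : ℝ) + 1) * (x ^ (2 * k) * x))
        = c ν k * x ^ (2 * k) * ((x - 2 * ((k : ℝ) + 1)) ^ 2 + 4 * ((k : ℝ) + 1) * ν)
          / (2 * (4 * ((k : ℝ) + 1) * ((k : ℝ) + ν + 1))) := by
      field_simp
      ring
    have hpos : 0 ≤ c ν k * x ^ (2 * k) * ((x - 2 * ((k : ℝ) + 1)) ^ 2 + 4 * ((k : ℝ) + 1) * ν)
        / (2 * (4 * ((k : ℝ) + 1) * ((k : ℝ) + ν + 1))) := by positivity
    linarith [heq ▸ hpos]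
  have hb0 : b 0 = 0 := by simp [hb]
  have ha0 : 0 ≤ a 0 := by
    simpa [ha] using (c_pos hν 0).le
  calc ∑' m, b m = b 0 + ∑' k, b (k + 1) := Summable.tsum_eq_zero_add Sb
    _ = ∑' k, b (k + 1) := by rw [hb0, zero_add]
    _ ≤ ∑' k, (a k + a (k + 1)) / 2 :=
        Summable.tsum_le_tsum key Sb' ((Sa.add Sa').div_const 2)
    _ = (∑' k, a k + ∑' k, a (k + 1)) / 2 := by
        rw [tsum_div_const, Summable.tsum_add Sa Sa']
    _ ≤ g ν x := by
        have h1 : ∑' m, a m = a 0 + ∑' k, a (k + 1) := Summable.tsum_eq_zero_add Sa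
        have : g ν x = ∑' m, a m := rfl
        linarith

lemma hasDerivAt_g {ν : ℝ} (hν : 0 < ν) {B : ℝ} (hB : 1 ≤ B) {x : ℝ}
    (hx : x ∈ Set.Ioo (-B) B) :
    HasDerivAt (g ν) (∑' m : ℕ, c ν m * (((2 * m : ℕ) : ℝ) * x ^ (2 * m - 1))) x := by
  have hB0 : (0:ℝ) < B := by linarith
  apply hasDerivAt_tsum_of_isPreconnected
    (u := fun m : ℕ => 2 * (((m : ℝ) + 1) * c ν m * B ^ (2 * m)))
    ((summable_S hν hB0).mul_left 2) isOpen_Ioo (convex_Ioo _ _).isPreconnected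
    (fun m y _ => ((hasDerivAt_pow (2 * m) y).const_mul (c ν m)))
    _ (Set.mem_Ioo.mpr ⟨by linarith, hB0⟩) (summable_g hν 0) hx
  intro m y hy
  have hc := c_pos hν m
  have hyB : |y| ≤ B := by
    rw [abs_le]; exact ⟨(Set.mem_Ioo.mp hy).1.le, (Set.mem_Ioo.mp hy).2.le⟩
  have h2 : |y| ^ (2 * m - 1) ≤ B ^ (2 * m) :=
    (pow_le_pow_left₀ (abs_nonneg y) hyB _).trans (pow_le_pow_right₀ hB (Nat.sub_le _ _))
  show _ ≤ 2 * (((m : ℝ) + 1) * c ν m * B ^ (2 * m))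
  rw [norm_mul, norm_mul, Real.norm_of_nonneg hc.le,
    Real.norm_of_nonneg (by positivity : (0:ℝ) ≤ ((2 * m : ℕ) : ℝ)), Real.norm_eq_abs, abs_pow]
  calc c ν m * (((2 * m : ℕ) : ℝ) * |y| ^ (2 * m - 1))
      ≤ c ν m * ((2 * ((m : ℝ) + 1)) * B ^ (2 * m)) :=
        mul_le_mul_of_nonneg_left
          (mul_le_mul (by push_cast; linarith) h2 (by positivity) (by positivity)) hc.le
    _ = 2 * (((m : ℝ) + 1) * c ν m * B ^ (2 * m)) := by ring

end BesselAux

namespace BesselAux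

lemma ratio_le {ν : ℝ} (hν : 0 < ν) {x y : ℝ} (hx : 0 < x) (hxy : x ≤ y) :
    g ν y ≤ Real.exp (y - x) * g ν x := by
  set B : ℝ := y + 1 with hBdef
  have hy0 : 0 < y := lt_of_lt_of_le hx hxy
  have hB : (1:ℝ) ≤ B := by simp [hBdef]; linarith
  have hmem : ∀ t ∈ Set.Icc (0:ℝ) y, t ∈ Set.Ioo (-B) B := fun t ht =>
    ⟨by have := ht.1; simp only [hBdef]; linarith, by have := ht.2; simp only [hBdef]; linarith⟩
  set F : ℝ → ℝ := fun t => Real.exp (-t) * g ν t with hFdef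
  have hF : ∀ t ∈ Set.Ioo (-B) B, HasDerivAt F
      ((-Real.exp (-t)) * g ν t +
        Real.exp (-t) * ∑' m : ℕ, c ν m * (((2 * m : ℕ) : ℝ) * t ^ (2 * m - 1))) t := by
    intro t ht
    have h1 : HasDerivAt (fun u : ℝ => Real.exp (-u)) (-Real.exp (-t)) t := by
      simpa using (hasDerivAt_neg t).exp
    exact h1.mul (hasDerivAt_g hν hB ht)
  have hA : AntitoneOn F (Set.Icc 0 y) := by
    apply antitoneOn_of_deriv_nonpos (convex_Icc 0 y)
    · exact fun t ht => ((hF t (hmem t ht)).continuousAt).continuousWithinAt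
    · rw [interior_Icc]
      exact fun t ht =>
        ((hF t (hmem t ⟨ht.1.le, ht.2.le⟩)).differentiableAt).differentiableWithinAt
    · rw [interior_Icc]
      intro t ht
      rw [(hF t (hmem t ⟨ht.1.le, ht.2.le⟩)).deriv]
      have hd := gderiv_le hν ht.1.le
      have he := Real.exp_pos (-t)
      nlinarith [mul_le_mul_of_nonneg_left hd he.le]
  have hFyx : F y ≤ F x := hA ⟨hx.le, hxy⟩ ⟨hy0.le, le_refl y⟩ hxy
  have h3 := mul_le_mul_of_nonneg_left hFyx (Real.exp_pos y).le
  simp only [hFdef] at h3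
  rw [← mul_assoc, ← Real.exp_add, add_neg_cancel, Real.exp_zero, one_mul,
    ← mul_assoc, ← Real.exp_add] at h3
  simpa [← sub_eq_add_neg] using h3

lemma abs_log_g {ν : ℝ} (hν : 0 < ν) {x y : ℝ} (hx : 0 < x) (hy : 0 < y) :
    |Real.log (g ν y / g ν x)| ≤ |x - y| := by
  have key : ∀ a b : ℝ, 0 < a → a ≤ b → |Real.log (g ν b / g ν a)| ≤ b - a := by
    intro a b ha hab
    have hga := g_pos hν a
    have hgb := g_pos hν b
    have h1 : 1 ≤ g ν b / g ν a := (one_le_div hga).mpr (g_mono hν ha.le hab)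
    have h2 : g ν b / g ν a ≤ Real.exp (b - a) :=
      (div_le_iff₀ hga).mpr (ratio_le hν ha hab)
    rw [abs_of_nonneg (Real.log_nonneg h1)]
    calc Real.log (g ν b / g ν a) ≤ Real.log (Real.exp (b - a)) :=
          Real.log_le_log (by positivity) h2
      _ = b - a := Real.log_exp _
  rcases le_total x y with h | h
  · rw [abs_of_nonpos (by linarith : x - y ≤ 0), neg_sub]
    exact key x y hx h
  · have hgx := g_pos hν x
    have hgy := g_pos hν y
    rw [abs_of_nonneg (by linarith : 0 ≤ x - y)]
    have e : Real.log (g ν y / g ν x) = -Real.log (g ν x / g ν y) := by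
      rw [Real.log_div hgy.ne' hgx.ne', Real.log_div hgx.ne' hgy.ne']; ring
    rw [e, abs_neg]
    have := key y x hy h
    rwa [abs_of_nonneg (Real.log_nonneg ((one_le_div hgy).mpr (g_mono hν hy.le h)))] at this ⊢

end BesselAux


open BesselAux in
lemma besselI_eq {ν κ : ℝ} (hν : 0 < ν) (hκ : 0 < κ) :
    besselI ν κ = (κ / 2) ^ ν * g ν κ := by
  unfold besselI g
  rw [← tsum_mul_left]
  congr 1
  funext m
  have hκ2 : (0:ℝ) < κ / 2 := by linarith
  have hΓ : Real.Gamma ((m : ℝ) + ν + 1) ≠ 0 :=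
    (Real.Gamma_pos_of_pos (by positivity)).ne'
  have hfac : ((m.factorial : ℝ)) ≠ 0 := by positivity
  have e : (κ / 2) ^ ((2 * (m : ℝ)) + ν) = (κ / 2) ^ ν * (κ / 2) ^ (2 * m : ℕ) := by
    rw [Real.rpow_add hκ2, show ((2 * (m : ℝ)) = ((2 * m : ℕ) : ℝ)) by push_cast; ring,
      Real.rpow_natCast]
    ring
  rw [e]
  unfold c
  rw [div_pow, show ((2:ℝ) ^ (2 * m) = 4 ^ m) by rw [pow_mul]; norm_num]
  field_simp

open BesselAux in
/-- For `κ₁, κ₂ > 0` and `ν = n/2 − 1 > 0`,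
`|log( κ₁^{n/2−1} I_{n/2−1}(κ₂) / (κ₂^{n/2−1} I_{n/2−1}(κ₁)) )| ≤ |κ₁ − κ₂|`. -/
theorem abs_log_bessel_normalizing_ratio_le (n : ℕ) (κ₁ κ₂ : ℝ)
    (hκ₁ : 0 < κ₁) (hκ₂ : 0 < κ₂) (hν : 0 < (n : ℝ) / 2 - 1) :
    |Real.log (κ₁ ^ ((n : ℝ) / 2 - 1) * besselI ((n : ℝ) / 2 - 1) κ₂ /
        (κ₂ ^ ((n : ℝ) / 2 - 1) * besselI ((n : ℝ) / 2 - 1) κ₁))| ≤ |κ₁ - κ₂| := by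
  set ν : ℝ := (n : ℝ) / 2 - 1 with hνdef
  rw [besselI_eq hν hκ₂, besselI_eq hν hκ₁]
  have h1 : κ₁ ^ ν ≠ 0 := (Real.rpow_pos_of_pos hκ₁ ν).ne'
  have h2 : κ₂ ^ ν ≠ 0 := (Real.rpow_pos_of_pos hκ₂ ν).ne'
  have h3 : (2:ℝ) ^ ν ≠ 0 := (Real.rpow_pos_of_pos two_pos ν).ne'
  have hg1 : g ν κ₁ ≠ 0 := (g_pos hν κ₁).ne'
  have key : κ₁ ^ ν * ((κ₂ / 2) ^ ν * g ν κ₂) / (κ₂ ^ ν * ((κ₁ / 2) ^ ν * g ν κ₁))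
      = g ν κ₂ / g ν κ₁ := by
    rw [Real.div_rpow hκ₁.le (by norm_num : (0:ℝ) ≤ 2),
      Real.div_rpow hκ₂.le (by norm_num : (0:ℝ) ≤ 2)]
    field_simp
  rw [key]
  exact abs_log_g hν hκ₁ hκ₂
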